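/- Let A be a C*-algebra, E ⊆ A a selfadjoint subspace, n ∈ ℕ, and X ∈ Mₙ(E) selfadjoint. Then the following are equivalent: (i) Metric.infDist X Mₙ(E)₊ ≤ 1; (ii) for every contractive positive functional φ on Mₙ(E), one has Re(φ X) ≥ −1 (note φ X is real since X is selfadjoint and φ is star-preserving). -/

import Mathlib

open scoped ComplexOrder Pointwise

noncomputable section

/-- The `n`-th matrix level `Mₙ(E)` of a subspace `E` of a C*-algebra `A`, realized inside a
C*-algebra `M` which is given together with a ⋆-algebra isomorphism
`e : Mₙ(A) ≃⋆ₐ[ℂ] M` (recall that the C*-norm on `Mₙ(A)` is unique, so this fully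
determines the norm and order structure of `Mₙ(E)`). -/
def matrixLevel {A M : Type*} [NonUnitalCStarAlgebra A] [NonUnitalCStarAlgebra M] {n : ℕ}
    (E : Submodule ℂ A) (e : Matrix (Fin n) (Fin n) A ≃⋆ₐ[ℂ] M) : Submodule ℂ M where
  carrier := {X : M | ∀ i j, e.symm X i j ∈ E}
  add_mem' := by
    intro a b ha hb i j
    rw [map_add, Matrix.add_apply]
    exact E.add_mem (ha i j) (hb i j)
  zero_mem' := by
    intro i j
    rw [map_zero]
    exact E.zero_mem
  smul_mem' := by
    intro c a ha i j
    rw [map_smul, Matrix.smul_apply]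
    exact E.smul_mem c (ha i j)

/-- `φ` is a (selfadjoint) positive functional on the subspace `S` of a C*-algebra:
it is star-preserving and takes nonnegative (real) values on the positive elements of `S`. -/
def IsPositiveFunctional {B : Type*} [NonUnitalCStarAlgebra B] [PartialOrder B]
    (S : Submodule ℂ B) (φ : S →L[ℂ] ℂ) : Prop :=
  (∀ (x : B) (hx : x ∈ S) (hsx : star x ∈ S), φ ⟨star x, hsx⟩ = starRingEnd ℂ (φ ⟨x, hx⟩)) ∧
    ∀ (x : B) (hx : x ∈ S), 0 ≤ x → 0 ≤ φ ⟨x, hx⟩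


lemma exists_symm_functional {M : Type*} [NonUnitalCStarAlgebra M] (φ₀ : M →L[ℂ] ℂ) :
    ∃ ψ : M →L[ℂ] ℂ, (∀ x, ψ x = (φ₀ x + starRingEnd ℂ (φ₀ (star x))) / 2) ∧ ‖ψ‖ ≤ ‖φ₀‖ := by
  have hbd : ∀ x : M, ‖(φ₀ x + starRingEnd ℂ (φ₀ (star x))) / 2‖ ≤ ‖φ₀‖ * ‖x‖ := by
    intro x
    have h1 := φ₀.le_opNorm x
    have h2 := φ₀.le_opNorm (star x)
    rw [norm_star] at h2
    have : ‖(φ₀ x + starRingEnd ℂ (φ₀ (star x))) / 2‖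
        ≤ (‖φ₀ x‖ + ‖starRingEnd ℂ (φ₀ (star x))‖) / 2 := by
      rw [norm_div]
      have h3 := norm_add_le (φ₀ x) (starRingEnd ℂ (φ₀ (star x)))
      have h4 : ‖(2 : ℂ)‖ = 2 := by norm_num
      rw [h4]
      linarith
    rw [RCLike.norm_conj] at this
    linarith
  refine ⟨LinearMap.mkContinuous
    { toFun := fun x => (φ₀ x + starRingEnd ℂ (φ₀ (star x))) / 2
      map_add' := fun x y => by
        simp only [star_add, map_add]
        ring
      map_smul' := fun c x => by
        simp only [star_smul, map_smul, smul_eq_mul, map_mul, RingHom.id_apply,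
          RCLike.star_def, RingHomCompTriple.comp_apply, starRingEnd_self_apply]
        ring }
    ‖φ₀‖ hbd, fun x => rfl, ?_⟩
  exact LinearMap.mkContinuous_norm_le _ (norm_nonneg φ₀) _

set_option maxHeartbeats 1000000 in
lemma key_lemma {M : Type*} [NonUnitalCStarAlgebra M] [PartialOrder M] [StarOrderedRing M]
    (S : Submodule ℂ M) (X : M) (hXE : X ∈ S) (hX : IsSelfAdjoint X) :
    Metric.infDist X {Y : M | Y ∈ (S : Set M) ∧ 0 ≤ Y} ≤ 1 ↔
      ∀ φ : S →L[ℂ] ℂ, IsPositiveFunctional S φ → ‖φ‖ ≤ 1 →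
        -1 ≤ (φ ⟨X, hXE⟩).re := by
  set K := {Y : M | Y ∈ (S : Set M) ∧ 0 ≤ Y} with hK
  have hK0 : (0 : M) ∈ K := ⟨S.zero_mem, le_refl 0⟩
  have hKne : K.Nonempty := ⟨0, hK0⟩
  have hSsmul : ∀ (t : ℝ) (y : M), y ∈ S → t • y ∈ S := by
    intro t y hy
    rw [show t • y = (t : ℂ) • y from (Complex.coe_smul t y).symm]
    exact S.smul_mem _ hy
  constructor
  · -- easy direction
    intro h φ hφ hn
    by_contra hcon
    push_neg at hcon
    set ε : ℝ := (-1 - (φ ⟨X, hXE⟩).re) / 2 with hεdef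
    have hε : 0 < ε := by rw [hεdef]; linarith
    obtain ⟨Y, hY, hdist⟩ := (Metric.infDist_lt_iff hKne).mp (lt_of_le_of_lt h (show (1:ℝ) < 1 + ε by linarith))
    have hXY : X - Y ∈ S := S.sub_mem hXE hY.1
    have hsplit : (⟨X, hXE⟩ : S) = ⟨Y, hY.1⟩ + ⟨X - Y, hXY⟩ := by
      ext; simp
    have hpos : 0 ≤ φ ⟨Y, hY.1⟩ := hφ.2 Y hY.1 hY.2
    have hposre : 0 ≤ (φ ⟨Y, hY.1⟩).re := (Complex.le_def.mp hpos).1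
    have hb : ‖φ ⟨X - Y, hXY⟩‖ ≤ 1 + ε := by
      calc ‖φ ⟨X - Y, hXY⟩‖ ≤ ‖φ‖ * ‖(⟨X - Y, hXY⟩ : S)‖ := φ.le_opNorm _
        _ = ‖φ‖ * ‖X - Y‖ := rfl
        _ ≤ 1 * (1 + ε) := by
            refine mul_le_mul hn ?_ (norm_nonneg _) zero_le_one
            rw [← dist_eq_norm]
            exact hdist.le
        _ = 1 + ε := one_mul _
    have hre : -(1 + ε) ≤ (φ ⟨X - Y, hXY⟩).re := by
      have h1 : |(φ ⟨X - Y, hXY⟩).re| ≤ ‖φ ⟨X - Y, hXY⟩‖ := Complex.abs_re_le_norm _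
      have := neg_abs_le (φ ⟨X - Y, hXY⟩).re
      linarith
    have hXsum : (φ ⟨X, hXE⟩).re = (φ ⟨Y, hY.1⟩).re + (φ ⟨X - Y, hXY⟩).re := by
      rw [hsplit, map_add, Complex.add_re]
    linarith
  · -- hard direction
    intro hφall
    by_contra hlt
    push_neg at hlt
    set d := Metric.infDist X K with hd
    have hd1 : 1 < d := hlt
    have hdpos : 0 < d := lt_trans one_pos hd1
    set U := K + Metric.ball (0 : M) d with hU
    have hUopen : IsOpen U := Metric.isOpen_ball.add_left
    have hUconv : Convex ℝ U := by
      refine Convex.add ?_ (convex_ball 0 d)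
      intro x hx y hy a b ha hb hab
      exact ⟨S.add_mem (hSsmul a x hx.1) (hSsmul b y hy.1),
        add_nonneg (smul_nonneg ha hx.2) (smul_nonneg hb hy.2)⟩
    have hXU : X ∉ U := by
      rintro hmem
      obtain ⟨y, hy, z, hz, rfl⟩ := Set.mem_add.mp hmem
      have h1 : Metric.infDist (y + z) K ≤ dist (y + z) y := Metric.infDist_le_dist_of_mem hy
      rw [dist_eq_norm] at h1
      simp only [add_sub_cancel_left] at h1
      rw [Metric.mem_ball, dist_zero_right] at hz
      rw [← hd] at h1
      linarith
    obtain ⟨f, hf⟩ := geometric_hahn_banach_open_point hUconv hUopen hXU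
    set c := f X with hc
    have hc0 : 0 < c := by
      have h0 : (0 : M) ∈ U := by
        rw [Set.mem_add]
        exact ⟨0, hK0, 0, by simpa using hdpos, by simp⟩
      simpa using hf 0 h0
    have hmemU : ∀ y ∈ K, ∀ z : M, ‖z‖ < d → y + z ∈ U := by
      intro y hy z hz
      exact Set.mem_add.mpr ⟨y, hy, z, by simpa [Metric.mem_ball, dist_zero_right] using hz, rfl⟩
    have hfK : ∀ y ∈ K, f y ≤ 0 := by
      intro y hy
      by_contra hpos
      push_neg at hpos
      have ht : ∀ t : ℝ, 0 < t → t * f y < c := by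
        intro t ht
        have hm : t • y + 0 ∈ U := hmemU _ ⟨hSsmul t y hy.1, smul_nonneg ht.le hy.2⟩ 0 (by simpa using hdpos)
        have := hf _ hm
        simpa [map_smul, smul_eq_mul] using this
      have h2 := ht ((c + 1) / f y) (by positivity)
      rw [div_mul_cancel₀ _ (ne_of_gt hpos)] at h2
      linarith
    have hfz : ∀ z : M, f z * d ≤ c * ‖z‖ := by
      intro z
      by_contra h
      push_neg at h
      have hz0 : ‖z‖ ≠ 0 := by
        intro h0
        rw [h0, mul_zero] at h
        have : f z = 0 := by
          have : z = 0 := norm_eq_zero.mp h0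
          rw [this, map_zero]
        rw [this, zero_mul] at h
        exact lt_irrefl 0 h
      have hznorm : 0 < ‖z‖ := lt_of_le_of_ne (norm_nonneg z) (Ne.symm hz0)
      have hfz0 : 0 < f z := by nlinarith [norm_nonneg z]
      set s := (c * ‖z‖ / f z + d) / 2 with hs
      have hq : c * ‖z‖ / f z < d := (div_lt_iff₀ hfz0).mpr (by linarith [h])
      have hs1 : c * ‖z‖ / f z < s := by rw [hs]; linarith
      have hs2 : s < d := by rw [hs]; linarith
      have hs0 : 0 < s := by
        have : 0 ≤ c * ‖z‖ / f z := by positivity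
        rw [hs]; linarith
      have hm : (0 : M) + (s / ‖z‖) • z ∈ U := by
        refine hmemU 0 hK0 _ ?_
        rw [norm_smul, Real.norm_eq_abs, abs_of_pos (by positivity), div_mul_cancel₀ _ hz0]
        exact hs2
      have hlt2 := hf _ hm
      rw [zero_add, map_smul, smul_eq_mul] at hlt2
      have : c < s / ‖z‖ * f z := by
        rw [div_mul_eq_mul_div, lt_div_iff₀ hznorm]
        have := (div_lt_iff₀ hfz0).mp hs1
        linarith
      linarith
    have hnormf : ‖f‖ ≤ c / d := by
      refine f.opNorm_le_bound (by positivity) ?_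
      intro z
      rw [Real.norm_eq_abs, abs_le]
      constructor
      · have h1 := hfz (-z)
        rw [map_neg, norm_neg] at h1
        rw [neg_le, div_mul_eq_mul_div, le_div_iff₀ hdpos]
        linarith
      · have h1 := hfz z
        rw [div_mul_eq_mul_div, le_div_iff₀ hdpos]
        linarith
    -- complexify and symmetrize
    set φ₀ : M →L[ℂ] ℂ := StrongDual.extendRCLike (-f) with hφ₀
    have hre : ∀ x : M, (φ₀ x).re = -(f x) := by
      intro x
      simp [hφ₀, ContinuousLinearMap.extendTo𝕜'_apply]
    have hnormφ₀ : ‖φ₀‖ ≤ c / d := by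
      rw [hφ₀, ContinuousLinearMap.norm_extendTo𝕜', norm_neg]
      exact hnormf
    obtain ⟨ψ, hψeq, hψnorm⟩ := exists_symm_functional φ₀
    have hψsa : ∀ x : M, star x = x → ψ x = ((φ₀ x).re : ℂ) := by
      intro x hx
      rw [hψeq, hx, Complex.add_conj]
      push_cast
      ring
    have hψstar : ∀ x : M, ψ (star x) = starRingEnd ℂ (ψ x) := by
      intro x
      rw [hψeq, hψeq, star_star, map_div₀, map_add]
      simp [Complex.conj_conj, map_ofNat, add_comm]
    set r : ℝ := d / c with hr
    have hr0 : 0 < r := by positivity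
    set φ' : S →L[ℂ] ℂ := ψ.comp S.subtypeL with hφ'
    set φ : S →L[ℂ] ℂ := ((r : ℂ)) • φ' with hφdef
    have hφ'app : ∀ x : S, φ' x = ψ (x : M) := fun x => rfl
    have hφapp : ∀ x : S, φ x = (r : ℂ) * ψ (x : M) := by
      intro x
      rw [hφdef]
      simp [hφ'app, Complex.real_smul]
    have hφ'norm : ‖φ'‖ ≤ ‖ψ‖ := by
      refine ContinuousLinearMap.opNorm_le_bound _ (norm_nonneg ψ) ?_
      intro x
      exact ψ.le_opNorm (x : M)
    have hφnorm : ‖φ‖ ≤ 1 := by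
      refine ContinuousLinearMap.opNorm_le_bound _ zero_le_one ?_
      intro x
      rw [hφapp, norm_mul]
      have h1 : ‖ψ (x : M)‖ ≤ (c / d) * ‖(x : M)‖ :=
        le_trans (ψ.le_opNorm _)
          (mul_le_mul_of_nonneg_right (le_trans hψnorm hnormφ₀) (norm_nonneg _))
      have h2 : ‖(r : ℂ)‖ = d / c := by
        rw [Complex.norm_real, Real.norm_eq_abs, abs_of_pos hr0]
      have h3 : d / c * (c / d * ‖(x : M)‖) = ‖(x : M)‖ := by
        field_simp
      have h4 : ‖(x : M)‖ = ‖x‖ := rfl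
      calc ‖(r : ℂ)‖ * ‖ψ (x : M)‖ ≤ (d / c) * (c / d * ‖(x : M)‖) := by
            rw [h2]
            exact mul_le_mul_of_nonneg_left h1 (by positivity)
        _ = 1 * ‖x‖ := by rw [h3, h4, one_mul]
    have hφpos : IsPositiveFunctional S φ := by
      constructor
      · intro x hx hsx
        rw [hφapp, hφapp]
        show (r : ℂ) * ψ (star x) = starRingEnd ℂ ((r : ℂ) * ψ x)
        rw [hψstar, map_mul, Complex.conj_ofReal]
      · intro x hx hxpos
        rw [hφapp]
        show (0 : ℂ) ≤ (r : ℂ) * ψ x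
        have hsa : star x = x := (IsSelfAdjoint.of_nonneg hxpos)
        rw [hψsa x hsa, hre]
        have hfx : f x ≤ 0 := hfK x ⟨hx, hxpos⟩
        have : (0:ℝ) ≤ r * (-(f x)) := mul_nonneg hr0.le (by linarith)
        calc (0 : ℂ) = ((0 : ℝ) : ℂ) := by norm_num
          _ ≤ ((r * (-(f x)) : ℝ) : ℂ) := by exact_mod_cast this
          _ = (r : ℂ) * ((-(f x) : ℝ) : ℂ) := by push_cast; ring
    have hXval : (φ ⟨X, hXE⟩).re = -d := by
      rw [hφapp]
      have hsa : star X = X := hX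
      rw [hψsa X hsa, hre]
      show ((r : ℂ) * ((-(f X) : ℝ) : ℂ)).re = -d
      rw [← Complex.ofReal_mul, Complex.ofReal_re]
      rw [hr, ← hc]
      field_simp
    have := hφall φ hφpos hφnorm
    rw [hXval] at this
    linarith

theorem stmt_1 {A M : Type*} [NonUnitalCStarAlgebra A] [PartialOrder A] [StarOrderedRing A]
    [NonUnitalCStarAlgebra M] [PartialOrder M] [StarOrderedRing M]
    (E : Submodule ℂ A) (hEclosed : IsClosed (E : Set A)) (hEstar : ∀ x ∈ E, star x ∈ E)
    {n : ℕ} (e : Matrix (Fin n) (Fin n) A ≃⋆ₐ[ℂ] M)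
    (X : M) (hXE : X ∈ matrixLevel E e) (hX : IsSelfAdjoint X) :
    Metric.infDist X {Y : M | Y ∈ matrixLevel E e ∧ 0 ≤ Y} ≤ 1 ↔
      ∀ φ : (matrixLevel E e) →L[ℂ] ℂ, IsPositiveFunctional (matrixLevel E e) φ → ‖φ‖ ≤ 1 →
        -1 ≤ (φ ⟨X, hXE⟩).re :=
  key_lemma (matrixLevel E e) X hXE hX
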